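/- If a formula A (in the grammar ⊤, ⊥, atom, →, ∧, ∀, without free-variable side conditions violated) admits no rewriting step from the rules A∧(B∧C) ↦ (A∧B)∧C, A∧⊤ ↦ A, ⊤∧A ↦ A, (A∧B)→C ↦ A→(B→C), ⊤→A ↦ A, A→(B∧C) ↦ (A→B)∧(A→C), A→⊤ ↦ ⊤, ∀x(A∧B) ↦ ∀x A ∧ ∀x B, ∀x⊤ ↦ ⊤, A→∀x B ↦ ∀x(A→B), then A is in canonical form, i.e. A is generated by the grammar: R ::= atom | ⊥; A ::= R | Q→A; Q ::= A | ∀x Q; B ::= Q | B∧Q; C ::= B | ⊤. -/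
import Mathlib


/-- First-order formulas: ⊤, ⊥, non-constant atoms `X t⃗` (atoms applied to
de Bruijn term-variable indices), implication, conjunction and universal
quantification (de Bruijn style: `all A` binds index 0). -/
inductive Formula : Type where
  | top : Formula
  | bot : Formula
  | atom : ℕ → List ℕ → Formula
  | arr : Formula → Formula → Formula
  | and : Formula → Formula → Formula
  | all : Formula → Formula

/-- The measure φ on formulas. -/
def phi : Formula → ℕ
  | .top => 2
  | .bot => 2
  | .atom _ _ => 2
  | .and A B => 2 * (phi A + 1) * phi B
  | .arr A B => phi B ^ phi A
  | .all A => phi A ^ 2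

/-- The measure ψ on formulas. -/
def psi : Formula → ℕ
  | .top => 2
  | .bot => 2
  | .atom _ _ => 2
  | .and A B => 2 * (psi A + 1) * psi B
  | .arr A B => psi B ^ psi A
  | .all A => 2 * psi A

/-- Shift the free de Bruijn term-variable indices ≥ c up by one. -/
def Formula.shiftFrom : ℕ → Formula → Formula
  | _, .top => .top
  | _, .bot => .bot
  | c, .atom X args => .atom X (args.map fun n => if n < c then n else n + 1)
  | c, .arr A B => .arr (A.shiftFrom c) (B.shiftFrom c)
  | c, .and A B => .and (A.shiftFrom c) (B.shiftFrom c)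
  | c, .all A => .all (A.shiftFrom (c + 1))

/-- `A.shift` is A regarded under one more binder ("x not free in A"). -/
def Formula.shift (A : Formula) : Formula := A.shiftFrom 0

/-- One-step rewriting: the ten oriented isomorphism equations, closed under
formula contexts.  (De Bruijn style: the side condition "x not free in A" of
the last rule is realized by shifting A under the binder.) -/
inductive Rw : Formula → Formula → Prop where
  | andAssoc (A B C) : Rw (.and A (.and B C)) (.and (.and A B) C)
  | andTopR (A) : Rw (.and A .top) A
  | andTopL (A) : Rw (.and .top A) A
  | curry (A B C) : Rw (.arr (.and A B) C) (.arr A (.arr B C))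
  | topArr (A) : Rw (.arr .top A) A
  | distrib (A B C) : Rw (.arr A (.and B C)) (.and (.arr A B) (.arr A C))
  | arrTop (A) : Rw (.arr A .top) .top
  | allAnd (A B) : Rw (.all (.and A B)) (.and (.all A) (.all B))
  | allTop : Rw (.all .top) .top
  | arrAll (A B) : Rw (.arr A (.all B)) (.all (.arr A.shift B))
  | arrL {A A'} (B) : Rw A A' → Rw (.arr A B) (.arr A' B)
  | arrR (A) {B B'} : Rw B B' → Rw (.arr A B) (.arr A B')
  | andL {A A'} (B) : Rw A A' → Rw (.and A B) (.and A' B)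
  | andR (A) {B B'} : Rw B B' → Rw (.and A B) (.and A B')
  | allC {A A'} : Rw A A' → Rw (.all A) (.all A')

/-- Canonical atoms: R ::= atom | ⊥. -/
inductive IsR : Formula → Prop where
  | atom (X ts) : IsR (.atom X ts)
  | bot : IsR .bot

mutual
/-- Canonical →-forms: A ::= R | Q→A. -/
inductive IsA : Formula → Prop where
  | ofR {A} : IsR A → IsA A
  | arr {Q A} : IsQ Q → IsA A → IsA (.arr Q A)

/-- Canonical ∀-forms: Q ::= A | ∀x Q. -/
inductive IsQ : Formula → Prop where
  | ofA {A} : IsA A → IsQ A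
  | all {A} : IsQ A → IsQ (.all A)
end

/-- Canonical conjunctions: B ::= Q | B∧Q. -/
inductive IsB : Formula → Prop where
  | ofQ {A} : IsQ A → IsB A
  | and {B Q} : IsB B → IsQ Q → IsB (.and B Q)

/-- Canonical forms: C ::= B | ⊤. -/
inductive IsC : Formula → Prop where
  | ofB {A} : IsB A → IsC A
  | top : IsC .top

lemma isB_of_isC {A : Formula} (h : IsC A) (ht : A ≠ .top) : IsB A := by
  cases h with
  | ofB h => exact h
  | top => exact absurd rfl ht

lemma isQ_of_isB {A : Formula} (h : IsB A) (ha : ∀ X Y, A ≠ .and X Y) : IsQ A := by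
  cases h with
  | ofQ h => exact h
  | and _ _ => exact absurd rfl (ha _ _)

lemma isA_of_isQ {A : Formula} (h : IsQ A) (ha : ∀ X, A ≠ .all X) : IsA A := by
  cases h with
  | ofA h => exact h
  | all _ => exact absurd rfl (ha _)

/-- Every normal form of the rewriting system is in canonical form. -/
theorem normal_form_is_canonical :
    ∀ A : Formula, (∀ B : Formula, ¬ Rw A B) → IsC A := by
  intro A
  induction A with
  | top => intro _; exact IsC.top
  | bot => intro _; exact IsC.ofB (IsB.ofQ (IsQ.ofA (IsA.ofR IsR.bot)))
  | atom X ts => intro _; exact IsC.ofB (IsB.ofQ (IsQ.ofA (IsA.ofR (IsR.atom X ts))))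
  | arr A B ihA ihB =>
    intro h
    have hA : IsC A := ihA fun C hC => h _ (Rw.arrL B hC)
    have hB : IsC B := ihB fun C hC => h _ (Rw.arrR A hC)
    have hQ : IsQ A := by
      refine isQ_of_isB (isB_of_isC hA ?_) ?_
      · rintro rfl; exact h _ (Rw.topArr B)
      · rintro X Y rfl; exact h _ (Rw.curry X Y B)
    have hAB : IsA B := by
      refine isA_of_isQ (isQ_of_isB (isB_of_isC hB ?_) ?_) ?_
      · rintro rfl; exact h _ (Rw.arrTop A)
      · rintro X Y rfl; exact h _ (Rw.distrib A X Y)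
      · rintro X rfl; exact h _ (Rw.arrAll A X)
    exact IsC.ofB (IsB.ofQ (IsQ.ofA (IsA.arr hQ hAB)))
  | and A B ihA ihB =>
    intro h
    have hA : IsC A := ihA fun C hC => h _ (Rw.andL B hC)
    have hB : IsC B := ihB fun C hC => h _ (Rw.andR A hC)
    have hBA : IsB A := by
      refine isB_of_isC hA ?_
      rintro rfl; exact h _ (Rw.andTopL B)
    have hQ : IsQ B := by
      refine isQ_of_isB (isB_of_isC hB ?_) ?_
      · rintro rfl; exact h _ (Rw.andTopR A)
      · rintro X Y rfl; exact h _ (Rw.andAssoc A X Y)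
    exact IsC.ofB (IsB.and hBA hQ)
  | all A ihA =>
    intro h
    have hA : IsC A := ihA fun C hC => h _ (Rw.allC hC)
    have hQ : IsQ A := by
      refine isQ_of_isB (isB_of_isC hA ?_) ?_
      · rintro rfl; exact h _ Rw.allTop
      · rintro X Y rfl; exact h _ (Rw.allAnd X Y)
    exact IsC.ofB (IsB.ofQ (IsQ.all hQ))
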